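/- In the rooted-tree self-backhauling model with full-duplex base stations serving a mix of downlink (DL) and uplink (UL) users, the max-min rate equals γ* = min(γ_tx, γ_rx), where γ_tx = ( max_{i ∈ {0,…,N}} c_{tx,i} )^{-1} with c_{tx,i} = Σ_{DL users u with σ(u)=i} 1/R^f_{a,u} + (f(i) − w^{DL}_i)/R^f_1 for i ≠ 0 and c_{tx,0} = Σ_{DL users u with σ(u)=0} 1/R^f_{a,u} + (f^{DL}(0) − w^{DL}_0)/R^f_1, and γ_rx = ( max_{i ∈ {0,…,N}} c_{rx,i} )^{-1} with c_{rx,i} obtained from c_{tx,i} by replacing DL by UL everywhere (so c_{rx,i} = Σ_{UL users u with σ(u)=i} 1/R^f_{a,u} + (f(i) − w^{UL}_i)/R^f_1 for i ≠ 0 and c_{rx,0} = Σ_{UL users u with σ(u)=0} 1/R^f_{a,u} + (f^{UL}(0) − w^{UL}_0)/R^f_1). -/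

import Mathlib

open Finset
open scoped Classical

/-- A full-duplex self-backhauled cellular network on a routing tree, serving a mix of
downlink (DL) and uplink (UL) users. BSs are indexed by `Fin (N+1)` with `0` the fiber
site; there are `U+1 ≥ 1` users, each labelled DL (`dl u = true`) or UL
(`dl u = false`). Under full duplex, every backhaul link has instantaneous rate `R1f`
and the access link of user `u` has instantaneous rate `Raf u`. -/
structure FDNet (N U : ℕ) where
  /-- the parent map of the routing tree (parent of the root is the root) -/
  p : Fin (N + 1) → Fin (N + 1)
  hp0 : p 0 = 0
  hroot : ∀ i : Fin (N + 1), ∃ m : ℕ, p^[m] i = 0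
  /-- serving BS of each user -/
  σ : Fin (U + 1) → Fin (N + 1)
  /-- `true` if the user is downlink, `false` if uplink -/
  dl : Fin (U + 1) → Bool
  /-- instantaneous full-duplex backhaul rate -/
  R1f : ℝ
  hR1f : 0 < R1f
  /-- instantaneous full-duplex access rates -/
  Raf : Fin (U + 1) → ℝ
  hRaf : ∀ u, 0 < Raf u

namespace FDNet

variable {N U : ℕ}

/-- Links: access link of each user (`inl u`), or the backhaul link `(p i, i)` for
`i ≠ 0` (`inr i`; the summand `inr 0` is a dummy which is never a hop). -/
abbrev Link (N U : ℕ) := Fin (U + 1) ⊕ Fin (N + 1)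

/-- BS `i` lies on the tree path from the fiber site `0` to BS `j`. -/
def onPath (net : FDNet N U) (i j : Fin (N + 1)) : Prop :=
  ∃ m : ℕ, net.p^[m] j = i

/-- `l` is a hop on the route of user `u`. -/
def isHop (net : FDNet N U) (l : Link N U) (u : Fin (U + 1)) : Prop :=
  match l with
  | .inl u' => u' = u
  | .inr i => i ≠ 0 ∧ net.onPath i (net.σ u)

/-- BS `j` transmits when link `l` is active serving the data of user `u`
(for a DL user data flows away from the root, for a UL user toward the root). -/
def txAt (net : FDNet N U) (l : Link N U) (u : Fin (U + 1)) (j : Fin (N + 1)) : Prop :=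
  match l with
  | .inl u' => net.σ u' = j ∧ net.dl u' = true
  | .inr i => i ≠ 0 ∧ ((net.dl u = true ∧ j = net.p i) ∨ (net.dl u = false ∧ j = i))

/-- BS `j` receives when link `l` is active serving the data of user `u`. -/
def rxAt (net : FDNet N U) (l : Link N U) (u : Fin (U + 1)) (j : Fin (N + 1)) : Prop :=
  match l with
  | .inl u' => net.σ u' = j ∧ net.dl u' = false
  | .inr i => i ≠ 0 ∧ ((net.dl u = true ∧ j = i) ∨ (net.dl u = false ∧ j = net.p i))

/-- instantaneous rate of link `l`. -/
noncomputable def rate (net : FDNet N U) : Link N U → ℝ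
  | .inl u => net.Raf u
  | .inr _ => net.R1f

/-- Feasible scheduling matrix for full-duplex BSs: entries in `[0,1]`, zero unless the
link is a hop on the route of the user, and for every BS the total transmission time is
at most `1` and the total reception time is at most `1` (two separate constraints). -/
def Feasible (net : FDNet N U) (τ : Link N U → Fin (U + 1) → ℝ) : Prop :=
  (∀ l u, 0 ≤ τ l u ∧ τ l u ≤ 1) ∧
  (∀ l u, ¬ net.isHop l u → τ l u = 0) ∧
  (∀ j : Fin (N + 1),
    ∑ l : Link N U, ∑ u : Fin (U + 1), (if net.txAt l u j then τ l u else 0) ≤ 1) ∧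
  (∀ j : Fin (N + 1),
    ∑ l : Link N U, ∑ u : Fin (U + 1), (if net.rxAt l u j then τ l u else 0) ≤ 1)

/-- End-to-end rate of user `u`: minimum long-term rate over the hops of its route. -/
noncomputable def e2e (net : FDNet N U) (τ : Link N U → Fin (U + 1) → ℝ)
    (u : Fin (U + 1)) : ℝ :=
  (Finset.univ.filter fun l : Link N U => net.isHop l u).inf'
    ⟨Sum.inl u, Finset.mem_filter.mpr ⟨Finset.mem_univ _, rfl⟩⟩
    fun l => net.rate l * τ l u

/-- total effective load on BS `i`. -/
noncomputable def f (net : FDNet N U) (i : Fin (N + 1)) : ℕ :=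
  (Finset.univ.filter fun u : Fin (U + 1) => net.onPath i (net.σ u)).card

/-- effective DL load on BS `i`. -/
noncomputable def fDL (net : FDNet N U) (i : Fin (N + 1)) : ℕ :=
  (Finset.univ.filter fun u : Fin (U + 1) =>
    net.dl u = true ∧ net.onPath i (net.σ u)).card

/-- effective UL load on BS `i`. -/
noncomputable def fUL (net : FDNet N U) (i : Fin (N + 1)) : ℕ :=
  (Finset.univ.filter fun u : Fin (U + 1) =>
    net.dl u = false ∧ net.onPath i (net.σ u)).card

/-- number of DL users served by BS `i`. -/
noncomputable def wDL (net : FDNet N U) (i : Fin (N + 1)) : ℕ :=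
  (Finset.univ.filter fun u : Fin (U + 1) => net.dl u = true ∧ net.σ u = i).card

/-- number of UL users served by BS `i`. -/
noncomputable def wUL (net : FDNet N U) (i : Fin (N + 1)) : ℕ :=
  (Finset.univ.filter fun u : Fin (U + 1) => net.dl u = false ∧ net.σ u = i).card

/-- transmission time coefficient `c_{tx,i}`. -/
noncomputable def ctx (net : FDNet N U) (i : Fin (N + 1)) : ℝ :=
  (∑ u : Fin (U + 1),
    if net.σ u = i ∧ net.dl u = true then (net.Raf u)⁻¹ else 0)
    + (if i = 0 then ((net.fDL 0 : ℝ) - (net.wDL 0 : ℝ)) / net.R1f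
       else ((net.f i : ℝ) - (net.wDL i : ℝ)) / net.R1f)

/-- reception time coefficient `c_{rx,i}` (DL replaced by UL everywhere). -/
noncomputable def crx (net : FDNet N U) (i : Fin (N + 1)) : ℝ :=
  (∑ u : Fin (U + 1),
    if net.σ u = i ∧ net.dl u = false then (net.Raf u)⁻¹ else 0)
    + (if i = 0 then ((net.fUL 0 : ℝ) - (net.wUL 0 : ℝ)) / net.R1f
       else ((net.f i : ℝ) - (net.wUL i : ℝ)) / net.R1f)

end FDNet

namespace FDNet

variable {N U : ℕ} (net : FDNet N U)

lemma iter_zero (m : ℕ) : net.p^[m] 0 = 0 := Function.iterate_fixed net.hp0 m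

lemma rate_pos (l : Link N U) : 0 < net.rate l := by
  cases l with
  | inl u => exact net.hRaf u
  | inr i => exact net.hR1f

lemma eq_zero_of_periodic {x : Fin (N + 1)} {k : ℕ} (hk : k ≠ 0)
    (h : net.p^[k] x = x) : x = 0 := by
  obtain ⟨m, hm⟩ := net.hroot x
  have hx : net.p^[k * m] x = x := by
    rw [Function.iterate_mul]
    exact Function.iterate_fixed h m
  have h1 : m ≤ k * m := Nat.le_mul_of_pos_left m (Nat.pos_of_ne_zero hk)
  have h2 : net.p^[k * m] x = 0 := by
    have he : k * m = (k * m - m) + m := by omega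
    rw [he, Function.iterate_add_apply, hm, net.iter_zero]
  rw [hx] at h2
  exact h2

lemma onPath_self (j : Fin (N + 1)) : net.onPath j j := ⟨0, rfl⟩

lemma eq_zero_of_onPath_zero {i : Fin (N + 1)} (h : net.onPath i 0) : i = 0 := by
  obtain ⟨m, hm⟩ := h
  rw [net.iter_zero] at hm
  exact hm.symm

lemma child_unique_aux {s i i' : Fin (N + 1)} (hi' : i' ≠ 0)
    (hpp : net.p i = net.p i') {m m' : ℕ} (hm : net.p^[m] s = i)
    (hm' : net.p^[m'] s = i') (h : m ≤ m') : i = i' := by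
  obtain ⟨k, rfl⟩ := Nat.exists_eq_add_of_le h
  rw [show m + k = k + m from add_comm m k, Function.iterate_add_apply, hm] at hm'
  rcases Nat.eq_zero_or_pos k with rfl | hk
  · simpa using hm'
  · exfalso
    apply hi'
    apply net.eq_zero_of_periodic (k := k) hk.ne'
    obtain ⟨k', rfl⟩ := Nat.exists_eq_add_of_lt hk
    rw [zero_add] at *
    -- hm' : net.p^[k' + 1] i = i'
    rw [Function.iterate_succ_apply, hpp, ← Function.iterate_succ_apply] at hm'
    exact hm'

lemma child_unique {s i i' : Fin (N + 1)} (hi : i ≠ 0) (hi' : i' ≠ 0)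
    (h1 : net.onPath i s) (h2 : net.onPath i' s) (hpp : net.p i = net.p i') :
    i = i' := by
  obtain ⟨m, hm⟩ := h1
  obtain ⟨m', hm'⟩ := h2
  rcases le_total m m' with h | h
  · exact net.child_unique_aux hi' hpp hm hm' h
  · exact (net.child_unique_aux hi hpp.symm hm' hm h).symm

lemma child_exists_iff {s j : Fin (N + 1)} :
    (∃ i, i ≠ 0 ∧ net.onPath i s ∧ net.p i = j) ↔ (net.onPath j s ∧ s ≠ j) := by
  constructor
  · rintro ⟨i, hi0, ⟨m, hm⟩, hpi⟩
    have hjs : net.onPath j s := ⟨m + 1, by rw [Function.iterate_succ_apply', hm, hpi]⟩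
    refine ⟨hjs, ?_⟩
    rintro rfl
    have hper : net.p^[m + 1] s = s := by
      rw [Function.iterate_succ_apply', hm, hpi]
    have hs0 : s = 0 := net.eq_zero_of_periodic (Nat.succ_ne_zero m) hper
    exact hi0 (net.eq_zero_of_onPath_zero (hs0 ▸ (⟨m, hm⟩ : net.onPath i s)))
  · rintro ⟨hjs, hsj⟩
    classical
    have hex : ∃ m, net.p^[m] s = j := hjs
    obtain ⟨m, hm, hmin⟩ : ∃ m, net.p^[m] s = j ∧ ∀ k < m, net.p^[k] s ≠ j :=
      ⟨Nat.find hex, Nat.find_spec hex, fun k hk => Nat.find_min hex hk⟩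
    have hm0 : m ≠ 0 := by
      intro h0
      rw [h0] at hm
      exact hsj (hm ▸ rfl)
    obtain ⟨m', rfl⟩ : ∃ m', m = m' + 1 := ⟨m - 1, by omega⟩
    refine ⟨net.p^[m'] s, ?_, ⟨m', rfl⟩, ?_⟩
    · intro h0
      have hj0 : j = 0 := by
        rw [← hm, Function.iterate_succ_apply', h0, net.hp0]
      exact hmin m' (Nat.lt_succ_self m') (by rw [h0, hj0])
    · rw [← hm, Function.iterate_succ_apply']

noncomputable def fb (b : Bool) (i : Fin (N + 1)) : ℕ :=
  (Finset.univ.filter fun u : Fin (U + 1) =>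
    net.dl u = b ∧ net.onPath i (net.σ u)).card

noncomputable def wb (b : Bool) (i : Fin (N + 1)) : ℕ :=
  (Finset.univ.filter fun u : Fin (U + 1) => net.dl u = b ∧ net.σ u = i).card

def act (b : Bool) (l : Link N U) (u : Fin (U + 1)) (j : Fin (N + 1)) : Prop :=
  match l with
  | .inl u' => net.σ u' = j ∧ net.dl u' = b
  | .inr i => i ≠ 0 ∧ ((net.dl u = b ∧ j = net.p i) ∨ (net.dl u = !b ∧ j = i))

noncomputable def cgen (b : Bool) (i : Fin (N + 1)) : ℝ :=
  (∑ u : Fin (U + 1), if net.σ u = i ∧ net.dl u = b then (net.Raf u)⁻¹ else 0)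
    + (if i = 0 then ((net.fb b 0 : ℝ) - (net.wb b 0 : ℝ)) / net.R1f
       else ((net.f i : ℝ) - (net.wb b i : ℝ)) / net.R1f)

lemma act_true (l : Link N U) (u : Fin (U + 1)) (j : Fin (N + 1)) :
    net.act true l u j ↔ net.txAt l u j := by
  cases l <;> simp [act, txAt]

lemma act_false (l : Link N U) (u : Fin (U + 1)) (j : Fin (N + 1)) :
    net.act false l u j ↔ net.rxAt l u j := by
  cases l
  · simp [act, rxAt]
  · simp [act, rxAt]
    tauto

lemma cgen_true : net.cgen true = net.ctx := rfl

lemma cgen_false : net.cgen false = net.crx := rfl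

lemma fb_split (b : Bool) (j : Fin (N + 1)) :
    net.fb b j
      = (Finset.univ.filter fun u : Fin (U + 1) =>
          net.dl u = b ∧ net.onPath j (net.σ u) ∧ net.σ u ≠ j).card
        + net.wb b j := by
  classical
  rw [fb, wb, Finset.card_filter, Finset.card_filter, Finset.card_filter,
    ← Finset.sum_add_distrib]
  apply Finset.sum_congr rfl
  intro u _
  by_cases hσ : net.σ u = j <;> by_cases hd : net.dl u = b <;>
    simp [hσ, hd, net.onPath_self]

lemma f_split (j : Fin (N + 1)) : net.f j = net.fb true j + net.fb false j := by
  classical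
  rw [f, fb, fb, Finset.card_filter, Finset.card_filter, Finset.card_filter,
    ← Finset.sum_add_distrib]
  apply Finset.sum_congr rfl
  intro u _
  cases hd : net.dl u <;> simp [hd]

lemma f_split' (b : Bool) (j : Fin (N + 1)) :
    net.f j = net.fb b j + net.fb (!b) j := by
  cases b
  · rw [Bool.not_false, f_split, add_comm]
  · rw [Bool.not_true, f_split]

lemma wb_le_fb (b : Bool) (i : Fin (N + 1)) : net.wb b i ≤ net.fb b i := by
  apply Finset.card_le_card
  intro u hu
  simp only [Finset.mem_filter] at *
  exact ⟨hu.1, hu.2.1, by rw [hu.2.2]; exact net.onPath_self i⟩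

lemma fb_le_f (b : Bool) (i : Fin (N + 1)) : net.fb b i ≤ net.f i := by
  apply Finset.card_le_card
  intro u hu
  simp only [Finset.mem_filter] at *
  exact ⟨hu.1, hu.2.2⟩

lemma sum_indicator {α : Type*} [Fintype α] (P : α → Prop) (c : ℝ) :
    (∑ a : α, if P a then c else 0) = ((Finset.univ.filter P).card : ℝ) * c := by
  classical
  rw [← Finset.sum_filter, Finset.sum_const, nsmul_eq_mul]

lemma sum_child (s j : Fin (N + 1)) (c : ℝ) :
    (∑ i : Fin (N + 1), if i ≠ 0 ∧ net.onPath i s ∧ j = net.p i then c else 0)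
      = if net.onPath j s ∧ s ≠ j then c else 0 := by
  classical
  by_cases h : net.onPath j s ∧ s ≠ j
  · obtain ⟨i0, hi0, hon, hpi⟩ := net.child_exists_iff.mpr h
    rw [if_pos h, Finset.sum_eq_single i0]
    · rw [if_pos ⟨hi0, hon, hpi.symm⟩]
    · intro i _ hne
      rw [if_neg]
      rintro ⟨h1, h2, h3⟩
      exact hne (net.child_unique h1 hi0 h2 hon (h3.symm.trans hpi.symm))
    · intro hmem
      exact absurd (Finset.mem_univ i0) hmem
  · rw [if_neg h, Finset.sum_eq_zero]
    intro i _
    rw [if_neg]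
    rintro ⟨h1, h2, h3⟩
    exact h (net.child_exists_iff.mp ⟨i, h1, h2, h3.symm⟩)

lemma sum_self (s j : Fin (N + 1)) (c : ℝ) :
    (∑ i : Fin (N + 1), if i ≠ 0 ∧ net.onPath i s ∧ j = i then c else 0)
      = if j ≠ 0 ∧ net.onPath j s then c else 0 := by
  classical
  rw [Finset.sum_eq_single j]
  · by_cases h : j ≠ 0 ∧ net.onPath j s
    · rw [if_pos ⟨h.1, h.2, rfl⟩, if_pos h]
    · rw [if_neg (fun ⟨h1, h2, _⟩ => h ⟨h1, h2⟩), if_neg h]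
  · intro i _ hne
    rw [if_neg]
    rintro ⟨-, -, rfl⟩
    exact hne rfl
  · intro hmem
    exact absurd (Finset.mem_univ j) hmem

lemma key (b : Bool) (j : Fin (N + 1)) :
    (∑ l : Link N U, ∑ u : Fin (U + 1),
      if net.isHop l u ∧ net.act b l u j then (net.rate l)⁻¹ else 0)
      = net.cgen b j := by
  classical
  rw [Fintype.sum_sum_type]
  have haccess : (∑ u' : Fin (U + 1), ∑ u : Fin (U + 1),
      if net.isHop (.inl u') u ∧ net.act b (.inl u') u j
        then (net.rate (.inl u'))⁻¹ else 0)
      = ∑ u : Fin (U + 1),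
          if net.σ u = j ∧ net.dl u = b then (net.Raf u)⁻¹ else 0 := by
    apply Finset.sum_congr rfl
    intro u' _
    rw [Finset.sum_eq_single u']
    · simp [isHop, act, rate]
    · intro u _ hne
      rw [if_neg]
      rintro ⟨h1, -⟩
      exact hne ((show u' = u from h1) ▸ rfl)
    · intro hmem
      exact absurd (Finset.mem_univ u') hmem
  have huser : ∀ u : Fin (U + 1),
      (∑ i : Fin (N + 1),
        if net.isHop (.inr i) u ∧ net.act b (.inr i) u j
          then (net.rate (.inr i))⁻¹ else 0)
      = (if net.dl u = b ∧ net.onPath j (net.σ u) ∧ net.σ u ≠ j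
          then net.R1f⁻¹ else 0)
        + (if net.dl u = !b ∧ j ≠ 0 ∧ net.onPath j (net.σ u)
            then net.R1f⁻¹ else 0) := by
    intro u
    by_cases hb : net.dl u = b
    · have hb' : ¬ net.dl u = !b := by simp [hb]
      have hstep : (∑ i : Fin (N + 1),
          if net.isHop (.inr i) u ∧ net.act b (.inr i) u j
            then (net.rate (.inr i))⁻¹ else 0)
          = ∑ i : Fin (N + 1),
              if i ≠ 0 ∧ net.onPath i (net.σ u) ∧ j = net.p i
                then net.R1f⁻¹ else 0 := by
        apply Finset.sum_congr rfl
        intro i _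
        refine if_congr ?_ rfl rfl
        constructor
        · rintro ⟨⟨h1, h2⟩, -, h4⟩
          rcases h4 with ⟨-, h4⟩ | ⟨h4, -⟩
          · exact ⟨h1, h2, h4⟩
          · exact absurd h4 hb'
        · rintro ⟨h1, h2, h3⟩
          exact ⟨⟨h1, h2⟩, h1, Or.inl ⟨hb, h3⟩⟩
      rw [hstep, net.sum_child]
      by_cases h : net.onPath j (net.σ u) ∧ net.σ u ≠ j <;>
        simp [h, hb, hb']
    · have hb2 : net.dl u = !b := by
        cases hbu : net.dl u <;> cases b <;> simp_all
      have hstep : (∑ i : Fin (N + 1),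
          if net.isHop (.inr i) u ∧ net.act b (.inr i) u j
            then (net.rate (.inr i))⁻¹ else 0)
          = ∑ i : Fin (N + 1),
              if i ≠ 0 ∧ net.onPath i (net.σ u) ∧ j = i
                then net.R1f⁻¹ else 0 := by
        apply Finset.sum_congr rfl
        intro i _
        refine if_congr ?_ rfl rfl
        constructor
        · rintro ⟨⟨h1, h2⟩, -, h4⟩
          rcases h4 with ⟨h4, -⟩ | ⟨-, h4⟩
          · exact absurd h4 hb
          · exact ⟨h1, h2, h4⟩
        · rintro ⟨h1, h2, h3⟩
          exact ⟨⟨h1, h2⟩, h1, Or.inr ⟨hb2, h3⟩⟩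
      rw [hstep, net.sum_self]
      by_cases h : j ≠ 0 ∧ net.onPath j (net.σ u) <;>
        simp [h, hb, hb2]
  have hback : (∑ i : Fin (N + 1), ∑ u : Fin (U + 1),
      if net.isHop (.inr i) u ∧ net.act b (.inr i) u j
        then (net.rate (.inr i))⁻¹ else 0)
      = (if j = 0 then ((net.fb b 0 : ℝ) - (net.wb b 0 : ℝ)) / net.R1f
         else ((net.f j : ℝ) - (net.wb b j : ℝ)) / net.R1f) := by
    rw [Finset.sum_comm]
    rw [Finset.sum_congr rfl fun u _ => huser u]
    by_cases hj : j = 0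
    · subst hj
      rw [if_pos rfl, fb, wb, Finset.card_filter, Finset.card_filter]
      push_cast
      rw [div_eq_mul_inv, ← Finset.sum_sub_distrib, Finset.sum_mul]
      apply Finset.sum_congr rfl
      intro u _
      have h0 : net.onPath 0 (net.σ u) := net.hroot _
      by_cases hd : net.dl u = b
      · have hd2 : ¬ net.dl u = !b := by simp [hd]
        by_cases hσ : net.σ u = 0 <;> simp [hd, hd2, hσ, h0, net.onPath_self]
      · have hd2 : net.dl u = !b := by
          cases hbu : net.dl u <;> cases b <;> simp_all
        simp [hd, hd2, h0]
    · rw [if_neg hj, f, wb, Finset.card_filter, Finset.card_filter]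
      push_cast
      rw [div_eq_mul_inv, ← Finset.sum_sub_distrib, Finset.sum_mul]
      apply Finset.sum_congr rfl
      intro u _
      by_cases hd : net.dl u = b
      · have hd2 : ¬ net.dl u = !b := by simp [hd]
        by_cases hσ : net.σ u = j
        · simp [hd, hd2, hσ, net.onPath_self]
        · by_cases hon : net.onPath j (net.σ u) <;> simp [hd, hd2, hσ, hon]
      · have hd2 : net.dl u = !b := by
          cases hbu : net.dl u <;> cases b <;> simp_all
        by_cases hon : net.onPath j (net.σ u) <;> simp [hd, hd2, hon, hj]
  rw [haccess, hback, cgen]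

lemma cgen_nonneg (b : Bool) (j : Fin (N + 1)) : 0 ≤ net.cgen b j := by
  rw [cgen]
  apply add_nonneg
  · apply Finset.sum_nonneg
    intro u _
    split_ifs with h
    · exact inv_nonneg.mpr (net.hRaf u).le
    · rfl
  · split_ifs with h
    · apply div_nonneg _ net.hR1f.le
      rw [sub_nonneg]
      exact_mod_cast net.wb_le_fb b 0
    · apply div_nonneg _ net.hR1f.le
      rw [sub_nonneg]
      exact_mod_cast le_trans (net.wb_le_fb b j) (net.fb_le_f b j)

lemma inv_Raf_le_cgen (b : Bool) (u : Fin (U + 1)) (hu : net.dl u = b) :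
    (net.Raf u)⁻¹ ≤ net.cgen b (net.σ u) := by
  rw [cgen]
  have h1 : (net.Raf u)⁻¹
      ≤ ∑ u' : Fin (U + 1),
          if net.σ u' = net.σ u ∧ net.dl u' = b then (net.Raf u')⁻¹ else 0 := by
    have := Finset.single_le_sum (f := fun u' : Fin (U + 1) =>
      if net.σ u' = net.σ u ∧ net.dl u' = b then (net.Raf u')⁻¹ else 0)
      (fun u' _ => by
        split_ifs with h
        · exact inv_nonneg.mpr (net.hRaf u').le
        · rfl) (Finset.mem_univ u)
    rwa [if_pos ⟨rfl, hu⟩] at this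
  refine le_trans h1 (le_add_of_nonneg_right ?_)
  split_ifs with h
  · apply div_nonneg _ net.hR1f.le
    rw [sub_nonneg]
    exact_mod_cast net.wb_le_fb b 0
  · apply div_nonneg _ net.hR1f.le
    rw [sub_nonneg]
    exact_mod_cast le_trans (net.wb_le_fb b _) (net.fb_le_f b _)

lemma le_cgen_of_act (b : Bool) (j : Fin (N + 1)) (l : Link N U) (u : Fin (U + 1))
    (h1 : net.isHop l u) (h2 : net.act b l u j) :
    (net.rate l)⁻¹ ≤ net.cgen b j := by
  classical
  rw [← net.key b j]
  have hnn : ∀ (l' : Link N U) (u' : Fin (U + 1)),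
      0 ≤ (if net.isHop l' u' ∧ net.act b l' u' j then (net.rate l')⁻¹ else 0) := by
    intro l' u'
    split_ifs with h
    · exact inv_nonneg.mpr (net.rate_pos l').le
    · rfl
  calc (net.rate l)⁻¹
      = (if net.isHop l u ∧ net.act b l u j then (net.rate l)⁻¹ else 0) := by
        rw [if_pos ⟨h1, h2⟩]
    _ ≤ ∑ u' : Fin (U + 1),
          if net.isHop l u' ∧ net.act b l u' j then (net.rate l)⁻¹ else 0 :=
        Finset.single_le_sum (fun u' _ => hnn l u') (Finset.mem_univ u)
    _ ≤ ∑ l' : Link N U, ∑ u' : Fin (U + 1),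
          if net.isHop l' u' ∧ net.act b l' u' j then (net.rate l')⁻¹ else 0 :=
        Finset.single_le_sum
          (f := fun l' : Link N U => ∑ u' : Fin (U + 1),
            if net.isHop l' u' ∧ net.act b l' u' j then (net.rate l')⁻¹ else 0)
          (fun l' _ => Finset.sum_nonneg fun u' _ => hnn l' u') (Finset.mem_univ l)

lemma hop_witness (l : Link N U) (u : Fin (U + 1)) (h : net.isHop l u) :
    ∃ b j, net.act b l u j ∧ (net.rate l)⁻¹ ≤ net.cgen b j := by
  cases l with
  | inl u' =>
    have hu : u' = u := h
    refine ⟨net.dl u', net.σ u', ⟨rfl, rfl⟩, ?_⟩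
    exact net.le_cgen_of_act _ _ _ u h ⟨rfl, rfl⟩
  | inr i =>
    obtain ⟨hi, hon⟩ := h
    cases hd : net.dl u with
    | true =>
      refine ⟨true, net.p i, ⟨hi, Or.inl ⟨hd, rfl⟩⟩, ?_⟩
      exact net.le_cgen_of_act _ _ _ u ⟨hi, hon⟩ ⟨hi, Or.inl ⟨hd, rfl⟩⟩
    | false =>
      refine ⟨true, i, ⟨hi, Or.inr ⟨by simp [hd], rfl⟩⟩, ?_⟩
      exact net.le_cgen_of_act _ _ _ u ⟨hi, hon⟩ ⟨hi, Or.inr ⟨by simp [hd], rfl⟩⟩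

end FDNet


/-- **Max-min rate, full-duplex IAB (Theorem 2).** With full-duplex BSs on a
nearest-neighbour routing tree serving a mix of DL and UL users, the supremum over
feasible scheduling matrices of the minimum end-to-end user rate is attained and equals
`γ* = min (γ_tx, γ_rx)` with `γ_tx = (max_i c_{tx,i})⁻¹` and `γ_rx = (max_i c_{rx,i})⁻¹`. -/
theorem maxmin_fullduplex_IAB (N U : ℕ) (net : FDNet N U)
    (hDL : ∃ u, net.dl u = true) (hUL : ∃ u, net.dl u = false) :
    IsGreatest
      {θ : ℝ | ∃ τ : FDNet.Link N U → Fin (U + 1) → ℝ,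
          net.Feasible τ ∧ θ = Finset.univ.inf' Finset.univ_nonempty (net.e2e τ)}
      (min ((Finset.univ.sup' Finset.univ_nonempty net.ctx)⁻¹)
        ((Finset.univ.sup' Finset.univ_nonempty net.crx)⁻¹)) := by
  classical
  obtain ⟨u0, hu0⟩ := hDL
  obtain ⟨u1, hu1⟩ := hUL
  set Ct := Finset.univ.sup' Finset.univ_nonempty net.ctx with hCtdef
  set Cr := Finset.univ.sup' Finset.univ_nonempty net.crx with hCrdef
  have hctx_le : ∀ j, net.ctx j ≤ Ct := fun j => Finset.le_sup' _ (Finset.mem_univ j)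
  have hcrx_le : ∀ j, net.crx j ≤ Cr := fun j => Finset.le_sup' _ (Finset.mem_univ j)
  have hCt : 0 < Ct := by
    refine lt_of_lt_of_le (lt_of_lt_of_le (inv_pos.mpr (net.hRaf u0)) ?_) (hctx_le (net.σ u0))
    have := net.inv_Raf_le_cgen true u0 hu0
    rwa [net.cgen_true] at this
  have hCr : 0 < Cr := by
    refine lt_of_lt_of_le (lt_of_lt_of_le (inv_pos.mpr (net.hRaf u1)) ?_) (hcrx_le (net.σ u1))
    have := net.inv_Raf_le_cgen false u1 hu1
    rwa [net.cgen_false] at this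
  set γ := min Ct⁻¹ Cr⁻¹ with hγdef
  have hγ0 : 0 ≤ γ := le_min (inv_nonneg.mpr hCt.le) (inv_nonneg.mpr hCr.le)
  have hγrate : ∀ (l : FDNet.Link N U) (u : Fin (U + 1)),
      net.isHop l u → γ ≤ net.rate l := by
    intro l u h
    obtain ⟨b, j, hact, hle⟩ := net.hop_witness l u h
    cases b
    · have h1 : (net.rate l)⁻¹ ≤ Cr := by
        rw [net.cgen_false] at hle
        exact le_trans hle (hcrx_le j)
      calc γ ≤ Cr⁻¹ := min_le_right _ _
        _ ≤ ((net.rate l)⁻¹)⁻¹ := inv_anti₀ (inv_pos.mpr (net.rate_pos l)) h1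
        _ = net.rate l := inv_inv _
    · have h1 : (net.rate l)⁻¹ ≤ Ct := by
        rw [net.cgen_true] at hle
        exact le_trans hle (hctx_le j)
      calc γ ≤ Ct⁻¹ := min_le_left _ _
        _ ≤ ((net.rate l)⁻¹)⁻¹ := inv_anti₀ (inv_pos.mpr (net.rate_pos l)) h1
        _ = net.rate l := inv_inv _
  constructor
  · -- membership
    set τ : FDNet.Link N U → Fin (U + 1) → ℝ :=
      fun l u => if net.isHop l u then γ * (net.rate l)⁻¹ else 0 with hτdef
    have hτhop : ∀ l u, net.isHop l u → τ l u = γ * (net.rate l)⁻¹ := by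
      intro l u h
      rw [hτdef]
      exact if_pos h
    have hτtx : ∀ j, (∑ l : FDNet.Link N U, ∑ u : Fin (U + 1),
        if net.txAt l u j then τ l u else 0) = γ * net.ctx j := by
      intro j
      rw [← net.cgen_true, ← net.key true j, Finset.mul_sum]
      apply Finset.sum_congr rfl
      intro l _
      rw [Finset.mul_sum]
      apply Finset.sum_congr rfl
      intro u _
      rw [mul_ite, mul_zero, hτdef]
      by_cases h1 : net.txAt l u j <;> by_cases h2 : net.isHop l u <;>
        simp [h1, h2, net.act_true]
    have hτrx : ∀ j, (∑ l : FDNet.Link N U, ∑ u : Fin (U + 1),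
        if net.rxAt l u j then τ l u else 0) = γ * net.crx j := by
      intro j
      rw [← net.cgen_false, ← net.key false j, Finset.mul_sum]
      apply Finset.sum_congr rfl
      intro l _
      rw [Finset.mul_sum]
      apply Finset.sum_congr rfl
      intro u _
      rw [mul_ite, mul_zero, hτdef]
      by_cases h1 : net.rxAt l u j <;> by_cases h2 : net.isHop l u <;>
        simp [h1, h2, net.act_false]
    have he2e : ∀ u, net.e2e τ u = γ := by
      intro u
      have hmem : (Sum.inl u : FDNet.Link N U) ∈
          Finset.univ.filter (fun l : FDNet.Link N U => net.isHop l u) :=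
        Finset.mem_filter.mpr ⟨Finset.mem_univ _, rfl⟩
      have hval : ∀ l ∈ Finset.univ.filter (fun l : FDNet.Link N U => net.isHop l u),
          net.rate l * τ l u = γ := by
        intro l hl
        have hop : net.isHop l u := (Finset.mem_filter.mp hl).2
        rw [hτhop l u hop, mul_comm (net.rate l), mul_assoc,
          inv_mul_cancel₀ (net.rate_pos l).ne', mul_one]
      apply le_antisymm
      · exact (Finset.inf'_le _ hmem).trans_eq (hval _ hmem)
      · exact Finset.le_inf' _ _ fun l hl => (hval l hl).ge
    refine ⟨τ, ⟨?_, ?_, ?_, ?_⟩, ?_⟩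
    · intro l u
      constructor
      · rw [hτdef]
        dsimp only
        split_ifs with h
        · exact mul_nonneg hγ0 (inv_nonneg.mpr (net.rate_pos l).le)
        · exact le_refl 0
      · rw [hτdef]
        dsimp only
        split_ifs with h
        · calc γ * (net.rate l)⁻¹
              ≤ net.rate l * (net.rate l)⁻¹ :=
                mul_le_mul_of_nonneg_right (hγrate l u h)
                  (inv_nonneg.mpr (net.rate_pos l).le)
            _ = 1 := mul_inv_cancel₀ (net.rate_pos l).ne'
        · exact zero_le_one
    · intro l u h
      rw [hτdef]
      exact if_neg h
    · intro j
      rw [hτtx j]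
      calc γ * net.ctx j ≤ Ct⁻¹ * Ct := by
            apply mul_le_mul (min_le_left _ _) (hctx_le j) ?_ (inv_nonneg.mpr hCt.le)
            rw [← net.cgen_true]
            exact net.cgen_nonneg true j
        _ = 1 := inv_mul_cancel₀ hCt.ne'
    · intro j
      rw [hτrx j]
      calc γ * net.crx j ≤ Cr⁻¹ * Cr := by
            apply mul_le_mul (min_le_right _ _) (hcrx_le j) ?_ (inv_nonneg.mpr hCr.le)
            rw [← net.cgen_false]
            exact net.cgen_nonneg false j
        _ = 1 := inv_mul_cancel₀ hCr.ne'
    · apply le_antisymm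
      · exact Finset.le_inf' _ _ fun u _ => (he2e u).ge
      · exact (Finset.inf'_le _ (Finset.mem_univ u0)).trans_eq (he2e u0)
  · -- upper bound
    rintro θ ⟨τ, hfeas, rfl⟩
    obtain ⟨hrange, hzero, htx, hrx⟩ := hfeas
    set I := Finset.univ.inf' Finset.univ_nonempty (net.e2e τ) with hIdef
    have hhop : ∀ (l : FDNet.Link N U) (u : Fin (U + 1)),
        net.isHop l u → I ≤ net.rate l * τ l u := by
      intro l u h
      refine le_trans (Finset.inf'_le _ (Finset.mem_univ u)) ?_
      unfold FDNet.e2e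
      exact Finset.inf'_le (fun l' => net.rate l' * τ l' u)
        (Finset.mem_filter.mpr ⟨Finset.mem_univ _, h⟩)
    have hmain : ∀ (b : Bool) (j : Fin (N + 1)),
        I * net.cgen b j ≤ 1 := by
      intro b j
      have h1 : I * net.cgen b j = ∑ l : FDNet.Link N U, ∑ u : Fin (U + 1),
          if net.isHop l u ∧ net.act b l u j then I * (net.rate l)⁻¹ else 0 := by
        rw [← net.key b j, Finset.mul_sum]
        apply Finset.sum_congr rfl
        intro l _
        rw [Finset.mul_sum]
        apply Finset.sum_congr rfl
        intro u _
        rw [mul_ite, mul_zero]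
      have h2 : (∑ l : FDNet.Link N U, ∑ u : Fin (U + 1),
          if net.isHop l u ∧ net.act b l u j then I * (net.rate l)⁻¹ else 0)
          ≤ ∑ l : FDNet.Link N U, ∑ u : Fin (U + 1),
            if (if b then net.txAt l u j else net.rxAt l u j) then τ l u else 0 := by
        refine Finset.sum_le_sum fun l _ => Finset.sum_le_sum fun u _ => ?_
        have hab : net.act b l u j ↔ (if b then net.txAt l u j else net.rxAt l u j) := by
          cases b
          · simpa using net.act_false l u j
          · simpa using net.act_true l u j
        by_cases h2 : net.isHop l u
        · by_cases h1 : net.act b l u j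
          · rw [if_pos ⟨h2, h1⟩, if_pos (hab.mp h1)]
            have h3 := hhop l u h2
            calc I * (net.rate l)⁻¹
                ≤ (net.rate l * τ l u) * (net.rate l)⁻¹ :=
                  mul_le_mul_of_nonneg_right h3 (inv_nonneg.mpr (net.rate_pos l).le)
              _ = τ l u := by
                  rw [mul_comm (net.rate l), mul_assoc,
                    mul_inv_cancel₀ (net.rate_pos l).ne', mul_one]
          · rw [if_neg (fun hh => h1 hh.2), if_neg (fun hh => h1 (hab.mpr hh))]
        · rw [if_neg (fun hh => h2 hh.1)]
          split_ifs <;> first | exact (hrange l u).1 | exact le_refl 0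
      have h3 : (∑ l : FDNet.Link N U, ∑ u : Fin (U + 1),
          if (if b then net.txAt l u j else net.rxAt l u j) then τ l u else 0) ≤ 1 := by
        cases b
        · simpa using hrx j
        · simpa using htx j
      rw [h1]
      exact le_trans h2 h3
    apply le_min
    · obtain ⟨jt, -, hjt⟩ := Finset.exists_mem_eq_sup' Finset.univ_nonempty net.ctx
      have h2 : I * net.ctx jt ≤ 1 := by
        rw [← net.cgen_true]
        exact hmain true jt
      have hpos : 0 < net.ctx jt := by
        rw [← hjt, ← hCtdef]
        exact hCt
      have := (le_div_iff₀ hpos).mpr h2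
      rwa [one_div, ← hjt, ← hCtdef] at this
    · obtain ⟨jr, -, hjr⟩ := Finset.exists_mem_eq_sup' Finset.univ_nonempty net.crx
      have h2 : I * net.crx jr ≤ 1 := by
        rw [← net.cgen_false]
        exact hmain false jr
      have hpos : 0 < net.crx jr := by
        rw [← hjr, ← hCrdef]
        exact hCr
      have := (le_div_iff₀ hpos).mpr h2
      rwa [one_div, ← hjr, ← hCrdef] at this
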